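/- arXiv:1505.04463 — 6 statements merged into one kernel-verified Lean document; each statement's English description precedes it below -/
import Mathlib

section
/- Let E be a category with small hom-sets and all finite limits satisfying Giraud's conditions, and let C be the small full subcategory of E on the generating set. For each object C₀ of C, let J(C₀) be the set of sieves S on C₀ (in C) whose member morphisms form a jointly epimorphic family in E. Then J is a Grothendieck topology on C: the maximal sieve on each object is covering, covering sieves are stable under pullback along arbitrary morphisms of C, and the transitivity axiom holds. -/
/-!
STATEMENT 1: Under Giraud's conditions, on the small full subcategory `C` of `E`
spanned by a generating family, the assignment sending an object `C₀` to the set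
of sieves on `C₀` whose member morphisms form a jointly epimorphic family in `E`
is a Grothendieck topology.
-/

open CategoryTheory CategoryTheory.Limits

universe v u

namespace Giraud

variable {E : Type u} [Category.{v} E]

def IsExactFork {P M Q : E} (a b : P ⟶ M) (q : M ⟶ Q) : Prop :=
  IsKernelPair q a b ∧ ∃ w : a ≫ q = b ≫ q, Nonempty (IsColimit (Cofork.ofπ q w))

def IsEquivRelPair [HasFiniteLimits E] {P M : E} (a b : P ⟶ M) : Prop :=
  Mono (prod.lift a b) ∧
  (∃ r : M ⟶ P, r ≫ a = 𝟙 M ∧ r ≫ b = 𝟙 M) ∧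
  (∃ s : P ⟶ P, s ≫ a = b ∧ s ≫ b = a) ∧
  (∃ t : pullback b a ⟶ P,
      t ≫ a = pullback.fst b a ≫ a ∧ t ≫ b = pullback.snd b a ≫ b)

structure GiraudAxioms (E : Type u) [Category.{v} E] [HasFiniteLimits E] : Prop where
  hasCoproducts : HasCoproducts.{v} E
  mono_coprojection : ∀ {ι : Type v} (f : ι → E) [HasCoproduct f] (i : ι),
    Mono (Sigma.ι f i)
  disjoint_coprojections : ∀ {ι : Type v} (f : ι → E) [HasCoproduct f] (i j : ι),
    i ≠ j → Nonempty (IsInitial (pullback (Sigma.ι f i) (Sigma.ι f j)))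
  coproducts_stable : ∀ {ι : Type v} (f : ι → E) [HasCoproduct f] {D : E}
    (g : D ⟶ ∐ f),
    Nonempty (IsColimit (Cofan.mk D fun i => pullback.snd (Sigma.ι f i) g))
  epi_isCoequalizer : ∀ {A B : E} (f : A ⟶ B), Epi f →
    ∃ (X : E) (a b : X ⟶ A) (w : a ≫ f = b ≫ f),
      Nonempty (IsColimit (Cofork.ofπ f w))
  equivRel_effective : ∀ {P M : E} (a b : P ⟶ M), IsEquivRelPair a b →
    ∃ (Q : E) (q : M ⟶ Q) (w : a ≫ q = b ≫ q),
      Nonempty (IsColimit (Cofork.ofπ q w)) ∧ IsKernelPair q a b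
  exactForks_stable : ∀ {P M Q Q' : E} (a b : P ⟶ M) (q : M ⟶ Q)
    (w : a ≫ q = b ≫ q), IsKernelPair q a b →
    Nonempty (IsColimit (Cofork.ofπ q w)) → ∀ (g : Q' ⟶ Q),
    IsExactFork
      (pullback.map (a ≫ q) g q g a (𝟙 Q') (𝟙 Q) (by simp) (by simp))
      (pullback.map (a ≫ q) g q g b (𝟙 Q') (𝟙 Q) (by simp [w]) (by simp))
      (pullback.snd q g)
  has_generators : ∃ (ι : Type v) (G : ι → E),
    ∀ {X Y : E} (u v : X ⟶ Y), u ≠ v → ∃ (i : ι) (h : G i ⟶ X), h ≫ u ≠ h ≫ v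

/-- A sieve `S` on an object `C₀` of the full subcategory spanned by the family
`G : ι → E` is a jointly epimorphic family in `E`: two parallel morphisms out of
`G C₀` agreeing after composition with every member of `S` are equal. -/
def IsJointlyEpiSieve {ι : Type v} (G : ι → E) {C₀ : InducedCategory E G}
    (S : Sieve C₀) : Prop :=
  ∀ ⦃X : E⦄ (u v : (inducedFunctor G).obj C₀ ⟶ X),
    (∀ ⦃D : InducedCategory E G⦄ (f : D ⟶ C₀), S f →
      (inducedFunctor G).map f ≫ u = (inducedFunctor G).map f ≫ v) → u = v

/-- The jointly epimorphic sieves form a Grothendieck topology on the generating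
subcategory. -/
theorem jointlyEpiSieves_grothendieckTopology [HasFiniteLimits E]
    (h : GiraudAxioms E) {ι : Type v} (G : ι → E)
    (hG : ∀ {X Y : E} (u v : X ⟶ Y), u ≠ v →
      ∃ (i : ι) (h : G i ⟶ X), h ≫ u ≠ h ≫ v) :
    ∃ J : GrothendieckTopology (InducedCategory E G),
      ∀ (C₀ : InducedCategory E G) (S : Sieve C₀),
        S ∈ J C₀ ↔ IsJointlyEpiSieve G S := by
  refine ⟨⟨fun C₀ => {S | IsJointlyEpiSieve G S}, ?_, ?_, ?_⟩, fun C₀ S => Iff.rfl⟩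
  · -- maximal sieve
    intro C₀ X u v huv
    have h1 := huv (𝟙 C₀) trivial
    rwa [CategoryTheory.Functor.map_id, Category.id_comp, Category.id_comp] at h1
  · -- pullback stability
    intro C₀ C₁ S g₀ hS
    -- index the members of the sieve
    let A : Type v := Σ (D : InducedCategory E G), {f : D ⟶ C₀ // S f}
    let F : A → E := fun a => G a.1
    haveI := h.hasCoproducts A
    let c : ∐ F ⟶ G C₀ := Sigma.desc fun a => a.2.1.hom
    -- c is an epimorphism since S is jointly epi
    have hc : Epi c := by
      constructor
      intro X u v huv
      refine hS u v ?_
      intro D f hf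
      have hι : Sigma.ι F ⟨D, ⟨f, hf⟩⟩ ≫ c = (inducedFunctor G).map f :=
        Sigma.ι_desc _ _
      rw [← hι, Category.assoc, Category.assoc, huv]
    -- c is a regular epi, hence the coequalizer of its kernel pair
    obtain ⟨W, a, b, w, ⟨hcolim⟩⟩ := h.epi_isCoequalizer c hc
    haveI : RegularEpi c := ⟨W, a, b, w, hcolim⟩
    have kp : IsKernelPair c (pullback.fst c c) (pullback.snd c c) :=
      IsPullback.of_hasPullback c c
    have hcoeq : IsColimit (Cofork.ofπ c kp.w) := kp.toCoequalizer this
    -- pull back the exact fork along g₀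
    obtain ⟨-, w', ⟨hq⟩⟩ :=
      h.exactForks_stable (pullback.fst c c) (pullback.snd c c) c kp.w kp ⟨hcoeq⟩
        g₀.hom
    -- the pullback of the coproduct is a coproduct of pullbacks
    obtain ⟨hcofan⟩ := h.coproducts_stable F (pullback.fst c g₀.hom)
    intro X u v huv
    refine Cofork.IsColimit.hom_ext hq ?_
    refine hcofan.hom_ext ?_
    rintro ⟨a⟩
    simp only [Cofan.mk_ι_app, Cofork.π_ofπ]
    -- names for the pullback projections
    let e₁ := pullback.fst (Sigma.ι F a) (pullback.fst c g₀.hom)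
    let e₂ := pullback.snd (Sigma.ι F a) (pullback.fst c g₀.hom)
    have hdg : (e₂ ≫ pullback.snd c g₀.hom) ≫ g₀.hom
        = e₁ ≫ a.2.1.hom := by
      rw [Category.assoc, ← pullback.condition, ← Category.assoc,
        ← pullback.condition, Category.assoc, Sigma.ι_desc]
    by_contra hne
    have hne' : (e₂ ≫ pullback.snd c g₀.hom) ≫ u
        ≠ (e₂ ≫ pullback.snd c g₀.hom) ≫ v := by
      simpa only [Category.assoc] using hne
    obtain ⟨i, k, hk⟩ := hG _ _ hne'
    let D' : InducedCategory E G := i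
    let m0 : G i ⟶ G C₁ := k ≫ e₂ ≫ pullback.snd c g₀.hom
    let m : D' ⟶ C₁ := InducedCategory.homMk m0
    let n0 : G i ⟶ G a.1 := k ≫ e₁
    let n : D' ⟶ a.1 := InducedCategory.homMk n0
    have heq : (n ≫ a.2.1 : D' ⟶ C₀) = (m ≫ g₀ : D' ⟶ C₀) := by
      apply InducedCategory.hom_ext
      show (k ≫ e₁) ≫ a.2.1.hom
          = (k ≫ e₂ ≫ pullback.snd c g₀.hom) ≫ g₀.hom
      simp only [Category.assoc]
      congr 1
      rw [← hdg, Category.assoc]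
    have hmem : (S.pullback g₀).arrows m := by
      show S.arrows (m ≫ g₀)
      exact heq ▸ S.downward_closed a.2.2 n
    apply hk
    conv_lhs => rw [← Category.assoc]
    conv_rhs => rw [← Category.assoc]
    exact huv m hmem
  · -- transitivity
    intro C₀ S hS R hR X u v huv
    refine hS u v ?_
    intro D f hf
    refine hR hf ((inducedFunctor G).map f ≫ u) ((inducedFunctor G).map f ≫ v) ?_
    intro D' g hg
    have := huv (g ≫ f) hg
    rwa [Functor.map_comp, Category.assoc, Category.assoc] at this

end Giraud
end

section
/- Let E be a category with all finite limits in which every epimorphism is a coequalizer and every exact fork is stable under pullback. Then epimorphisms in E are stable under pullback: for any epimorphism f : A → C and any morphism g : D → C, the projection A ×_C D → D from the pullback is an epimorphism. -/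
/-!
STATEMENT 2: In a category with all finite limits in which every epimorphism is a
coequalizer and exact forks are stable under pullback, epimorphisms are stable
under pullback.
-/

open CategoryTheory CategoryTheory.Limits

universe v u

namespace Giraud

variable {E : Type u} [Category.{v} E]

theorem epi_stable_under_pullback [HasFiniteLimits E]
    (hepi : ∀ {A B : E} (f : A ⟶ B), Epi f →
      ∃ (X : E) (a b : X ⟶ A) (w : a ≫ f = b ≫ f),
        Nonempty (IsColimit (Cofork.ofπ f w)))
    (hstable : ∀ {P M Q Q' : E} (a b : P ⟶ M) (q : M ⟶ Q)
      (w : a ≫ q = b ≫ q), IsKernelPair q a b →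
      Nonempty (IsColimit (Cofork.ofπ q w)) → ∀ (g : Q' ⟶ Q),
      IsExactFork
        (pullback.map (a ≫ q) g q g a (𝟙 Q') (𝟙 Q) (by simp) (by simp))
        (pullback.map (a ≫ q) g q g b (𝟙 Q') (𝟙 Q) (by simp [w]) (by simp))
        (pullback.snd q g)) :
    ∀ {A C D : E} (f : A ⟶ C), Epi f → ∀ (g : D ⟶ C), Epi (pullback.snd f g) := by
  intro A C D f hf g
  obtain ⟨X, a, b, w, ⟨hc⟩⟩ := hepi f hf
  have kp : IsKernelPair f (pullback.fst f f) (pullback.snd f f) := IsPullback.of_hasPullback f f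
  haveI : RegularEpi f := ⟨X, a, b, w, hc⟩
  obtain ⟨_, ⟨w', ⟨hc'⟩⟩⟩ :=
    hstable (pullback.fst f f) (pullback.snd f f) f kp.w kp ⟨kp.toCoequalizer this⟩ g
  exact epi_of_isColimit_cofork hc'

end Giraud
end

section
/- Let E be a category with small hom-sets and all finite limits satisfying Giraud's conditions, let C be the small full subcategory of E on the generating set, and let J be the Grothendieck topology on C whose covering sieves are exactly the sieves that are jointly epimorphic families in E. Then for every object E₀ of E, the presheaf C₀ ↦ Hom_E(C₀, E₀) on C (with action by precomposition) is a J-sheaf: for every J-covering sieve every matching family has a unique amalgamation. -/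
/-!
STATEMENT 3: Under Giraud's conditions, with `C` the small full subcategory on
the generating set and `J` the topology of jointly epimorphic sieves, for every
object `E₀` of `E` the presheaf `C₀ ↦ Hom_E(C₀, E₀)` (with action by
precomposition) is a `J`-sheaf.
-/

open CategoryTheory CategoryTheory.Limits

universe v u

namespace Giraud

variable {E : Type u} [Category.{v} E]

/-- For every object `E₀` of `E`, the presheaf `Hom_E(−, E₀)` restricted to the
generating subcategory is a sheaf for the topology of jointly epimorphic sieves. -/
theorem homPresheaf_isSheaf [HasFiniteLimits E]
    (h : GiraudAxioms E) {ι : Type v} (G : ι → E)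
    (hG : ∀ {X Y : E} (u v : X ⟶ Y), u ≠ v →
      ∃ (i : ι) (h : G i ⟶ X), h ≫ u ≠ h ≫ v)
    (J : GrothendieckTopology (InducedCategory E G))
    (hJ : ∀ (C₀ : InducedCategory E G) (S : Sieve C₀),
      S ∈ J C₀ ↔ IsJointlyEpiSieve G S)
    (E₀ : E) :
    Presieve.IsSheaf J ((inducedFunctor G).op ⋙ yoneda.obj E₀) := by

  haveI : HasCoproducts.{v} E := h.hasCoproducts
  intro C₀ S hS x hx
  have hSepi : IsJointlyEpiSieve G S := (hJ C₀ S).mp hS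
  -- index type for the sieve
  let σ : Type v := Σ D : InducedCategory E G, { f : D ⟶ C₀ // S f }
  let A : E := ∐ (fun p : σ => G p.1)
  let e : A ⟶ G C₀ := Sigma.desc (fun p => (p.2.1.hom : G p.1 ⟶ G C₀))
  let m : A ⟶ E₀ := Sigma.desc (fun p => (x p.2.1 p.2.2 : G p.1 ⟶ E₀))
  have hιe : ∀ p : σ, Sigma.ι (fun p : σ => G p.1) p ≫ e = (p.2.1.hom : G p.1 ⟶ G C₀) := by
    intro p; simp [e]
  have hιm : ∀ p : σ, Sigma.ι (fun p : σ => G p.1) p ≫ m = (x p.2.1 p.2.2 : G p.1 ⟶ E₀) := by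
    intro p; simp [m]
  have he : Epi e := by
    constructor
    intro Y u v huv
    refine hSepi u v (fun D f hf => ?_)
    have := congrArg (fun z => Sigma.ι (fun p : σ => G p.1) ⟨D, f, hf⟩ ≫ z) huv
    simpa [← Category.assoc, hιe ⟨D, f, hf⟩] using this
  -- compatibility of the family against arbitrary test objects, via generators
  have lemC : ∀ {D D' : InducedCategory E G} (f : D ⟶ C₀) (hf : S f)
      (f' : D' ⟶ C₀) (hf' : S f') {Z : E}
      (q : Z ⟶ G D) (q' : Z ⟶ G D'),
      q ≫ (f.hom : G D ⟶ G C₀) = q' ≫ (f'.hom : G D' ⟶ G C₀) →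
      q ≫ (x f hf : G D ⟶ E₀) = q' ≫ (x f' hf' : G D' ⟶ E₀) := by
    intro D D' f hf f' hf' Z q q' hqq'
    by_contra hne
    obtain ⟨j, k, hk⟩ := hG _ _ hne
    apply hk
    let j' : InducedCategory E G := j
    let g₁ : j' ⟶ D := InducedCategory.homMk (show G j ⟶ G D from k ≫ q)
    let g₂ : j' ⟶ D' := InducedCategory.homMk (show G j ⟶ G D' from k ≫ q')
    have hcomm : g₁ ≫ f = g₂ ≫ f' := by
      apply InducedCategory.Hom.ext
      show (k ≫ q) ≫ (f.hom : G D ⟶ G C₀) = (k ≫ q') ≫ (f'.hom : G D' ⟶ G C₀)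
      rw [Category.assoc, Category.assoc, hqq']
    have h2 : (k ≫ q) ≫ (x f hf : G D ⟶ E₀) = (k ≫ q') ≫ (x f' hf' : G D' ⟶ E₀) :=
      hx g₁ g₂ hf hf' hcomm
    rw [Category.assoc, Category.assoc] at h2
    exact h2
  -- key lemma: m coequalizes anything that e coequalizes
  have L1 : ∀ {Z : E} (γ δ : Z ⟶ A), γ ≫ e = δ ≫ e → γ ≫ m = δ ≫ m := by
    intro Z γ δ hγδ
    by_contra hne
    obtain ⟨i, k, hk⟩ := hG _ _ hne
    apply hk
    rw [← Category.assoc, ← Category.assoc]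
    obtain ⟨c1⟩ := h.coproducts_stable (fun p : σ => G p.1) (k ≫ γ)
    apply c1.hom_ext
    rintro ⟨p⟩
    show pullback.snd (Sigma.ι (fun p : σ => G p.1) p) (k ≫ γ) ≫ (k ≫ γ) ≫ m
        = pullback.snd (Sigma.ι (fun p : σ => G p.1) p) (k ≫ γ) ≫ (k ≫ δ) ≫ m
    set s := pullback.snd (Sigma.ι (fun p : σ => G p.1) p) (k ≫ γ) with hs
    set q := pullback.fst (Sigma.ι (fun p : σ => G p.1) p) (k ≫ γ) with hq
    have hpb1 : q ≫ Sigma.ι (fun p : σ => G p.1) p = s ≫ (k ≫ γ) := pullback.condition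
    obtain ⟨c2⟩ := h.coproducts_stable (fun p : σ => G p.1) (s ≫ (k ≫ δ))
    apply c2.hom_ext
    rintro ⟨p'⟩
    show pullback.snd (Sigma.ι (fun p : σ => G p.1) p') (s ≫ (k ≫ δ)) ≫ s ≫ (k ≫ γ) ≫ m
        = pullback.snd (Sigma.ι (fun p : σ => G p.1) p') (s ≫ (k ≫ δ)) ≫ s ≫ (k ≫ δ) ≫ m
    set s' := pullback.snd (Sigma.ι (fun p : σ => G p.1) p') (s ≫ (k ≫ δ)) with hs'
    set q' := pullback.fst (Sigma.ι (fun p : σ => G p.1) p') (s ≫ (k ≫ δ)) with hq'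
    have hpb2 : q' ≫ Sigma.ι (fun p : σ => G p.1) p' = s' ≫ (s ≫ (k ≫ δ)) :=
      pullback.condition
    have h1m := hpb1 =≫ m
    have h2m := hpb2 =≫ m
    have h1e := hpb1 =≫ e
    have h2e := hpb2 =≫ e
    simp only [Category.assoc, hιm] at h1m h2m
    simp only [Category.assoc, hιe] at h1e h2e
    simp only [Category.assoc]
    rw [← h1m, ← h2m]
    have := lemC p.2.1 p.2.2 p'.2.1 p'.2.2 (s' ≫ q) q'
      (by rw [Category.assoc, h1e, hγδ, h2e])
    simpa only [Category.assoc] using this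
  obtain ⟨X, a, b, w, ⟨hcolim⟩⟩ := h.epi_isCoequalizer e he
  have hab : a ≫ m = b ≫ m := L1 a b w
  let t : G C₀ ⟶ E₀ := hcolim.desc (Cofork.ofπ m hab)
  have het : e ≫ t = m := hcolim.fac (Cofork.ofπ m hab) WalkingParallelPair.one
  have hamalg : ∀ {D : InducedCategory E G} (f : D ⟶ C₀) (hf : S.arrows f),
      (inducedFunctor G).map f ≫ t = x f hf := by
    intro D f hf
    have h0 : Sigma.ι (fun p : σ => G p.1) ⟨D, f, hf⟩ ≫ e = (inducedFunctor G).map f :=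
      hιe ⟨D, f, hf⟩
    have h1 : Sigma.ι (fun p : σ => G p.1) ⟨D, f, hf⟩ ≫ m = x f hf :=
      hιm ⟨D, f, hf⟩
    rw [← h0, Category.assoc, het]
    exact h1
  refine ⟨t, fun D f hf => hamalg f hf, ?_⟩
  intro t' ht'
  refine hSepi t' t (fun D f hf => ?_)
  have h1 : (inducedFunctor G).map f ≫ t' = x f hf := ht' f hf
  have h2 : (inducedFunctor G).map f ≫ t = x f hf := hamalg f hf
  rw [h1, h2]

end Giraud
end

section
/- Let E be a category with small hom-sets and all finite limits satisfying Giraud's conditions, let C be the small full subcategory of E on the generating set, and let A : C ⥤ E be the inclusion. Then the generating subcategory is dense: for every object E₀ of E, the comma category (A ↓ E₀) of pairs (C₀, x : A(C₀) → E₀) together with the canonical cocone from the forgetful diagram (A ↓ E₀) → E (sending (C₀, x) to A(C₀)) exhibits E₀ as the colimit of this diagram. -/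
/-!
STATEMENT 12: Under Giraud's conditions, with `C` the small full subcategory on
the generating set and `A : C ⥤ E` the inclusion, the generating subcategory is
dense: for every object `E₀`, the canonical cocone on the forgetful diagram
`(A ↓ E₀) ⥤ E` exhibits `E₀` as its colimit.
-/

open CategoryTheory CategoryTheory.Limits

universe v u

namespace Giraud

variable {E : Type u} [Category.{v} E]

variable {ι : Type v} (G : ι → E)

/-- The canonical cocone on the forgetful diagram `(A ↓ E₀) ⥤ E`,
`(C₀, x : A C₀ ⟶ E₀) ↦ A C₀`, with apex `E₀` and components the structure
morphisms `x`. -/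
@[simps]
def canonicalCocone (E₀ : E) :
    Cocone (CostructuredArrow.proj (inducedFunctor G) E₀ ⋙ inducedFunctor G) where
  pt := E₀
  ι :=
    { app := fun f => f.hom
      naturality := fun f f' g => by
        exact (CostructuredArrow.w g).trans (Category.comp_id _).symm }

/-- Under Giraud's conditions the generating subcategory is dense: every object
`E₀` of `E` is the colimit of the canonical diagram `(A ↓ E₀) ⥤ E` via the
canonical cocone. -/
theorem generators_dense [HasFiniteLimits E]
    (h : GiraudAxioms E)
    (hG : ∀ {X Y : E} (u v : X ⟶ Y), u ≠ v →
      ∃ (i : ι) (h : G i ⟶ X), h ≫ u ≠ h ≫ v)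
    (E₀ : E) :
    Nonempty (IsColimit (canonicalCocone G E₀)) := by
  classical
  let J := Σ i : ι, (G i ⟶ E₀)
  haveI := h.hasCoproducts J
  let f : J → E := fun j => G j.1
  let p : ∐ f ⟶ E₀ := Sigma.desc fun j => j.2
  have hι : ∀ j : J, Sigma.ι f j ≫ p = j.2 := fun j => Sigma.ι_desc _ j
  have hp_epi : Epi p := by
    constructor
    intro X u v huv
    by_contra hne
    obtain ⟨i, e, hne'⟩ := hG u v hne
    apply hne'
    have h1 := congrArg (fun m => Sigma.ι f ⟨i, e⟩ ≫ m) huv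
    simpa only [← Category.assoc, hι] using h1
  obtain ⟨X, a, b, w, ⟨hc⟩⟩ := h.epi_isCoequalizer p hp_epi
  refine ⟨IsColimit.ofExistsUnique fun s => ?_⟩
  let desc' : ∐ f ⟶ s.pt := Sigma.desc fun j => s.ι.app (CostructuredArrow.mk j.2)
  have hdesc' : ∀ j : J, Sigma.ι f j ≫ desc' = s.ι.app (CostructuredArrow.mk j.2) :=
    fun j => Sigma.ι_desc _ j
  -- key lemma
  have key : ∀ (k : ι) (g : G k ⟶ ∐ f) (y : G k ⟶ E₀), g ≫ p = y →
      g ≫ desc' = s.ι.app (CostructuredArrow.mk y) := by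
    intro k g y hg
    obtain ⟨hcol⟩ := h.coproducts_stable f g
    apply hcol.hom_ext
    rintro ⟨j⟩
    simp only [Cofan.mk_ι_app]
    by_contra hne
    obtain ⟨k', e, hne'⟩ := hG _ _ hne
    apply hne'
    have hfs : (e ≫ pullback.fst (Sigma.ι f j) g) ≫ j.2
        = (e ≫ pullback.snd (Sigma.ι f j) g) ≫ y := by
      rw [← hι j, ← hg]
      simp only [Category.assoc, ← pullback.condition_assoc]
    let x1 : (inducedFunctor G).obj k' ⟶ E₀ := (e ≫ pullback.fst (Sigma.ι f j) g) ≫ j.2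
    let x2 : (inducedFunctor G).obj k' ⟶ E₀ := (e ≫ pullback.snd (Sigma.ι f j) g) ≫ y
    let e1 : @Quiver.Hom (InducedCategory E G) _ k' j.1 :=
      InducedCategory.homMk (show G k' ⟶ G j.1 from e ≫ pullback.fst (Sigma.ι f j) g)
    let e2 : @Quiver.Hom (InducedCategory E G) _ k' k :=
      InducedCategory.homMk (show G k' ⟶ G k from e ≫ pullback.snd (Sigma.ι f j) g)
    let u1 : CostructuredArrow.mk x1 ⟶ CostructuredArrow.mk j.2 :=
      CostructuredArrow.homMk e1 rfl
    let u2 : CostructuredArrow.mk x2 ⟶ CostructuredArrow.mk y :=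
      CostructuredArrow.homMk e2 rfl
    have w1 := s.w u1
    have w2 := s.w u2
    simp only [Functor.comp_map, CostructuredArrow.proj_map,
      CostructuredArrow.homMk_left, u1, u2, e1, e2, x1, x2] at w1 w2
    calc e ≫ pullback.snd (Sigma.ι f j) g ≫ g ≫ desc'
        = (e ≫ pullback.fst (Sigma.ι f j) g) ≫ Sigma.ι f j ≫ desc' := by
          simp only [Category.assoc, ← pullback.condition_assoc]
      _ = (show G k' ⟶ s.pt from s.ι.app (CostructuredArrow.mk x1)) := by
          rw [hdesc']; exact w1
      _ = (show G k' ⟶ s.pt from s.ι.app (CostructuredArrow.mk x2)) := by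
          show s.ι.app (CostructuredArrow.mk ((e ≫ pullback.fst (Sigma.ι f j) g) ≫ j.2)) =
            s.ι.app (CostructuredArrow.mk ((e ≫ pullback.snd (Sigma.ι f j) g) ≫ y))
          rw [hfs]
      _ = e ≫ pullback.snd (Sigma.ι f j) g ≫ s.ι.app (CostructuredArrow.mk y) := by
          rw [← w2]
          exact Category.assoc e (pullback.snd (Sigma.ι f j) g)
            (s.ι.app (CostructuredArrow.mk y))
  have hab : a ≫ desc' = b ≫ desc' := by
    by_contra hne
    obtain ⟨k, e, hne'⟩ := hG _ _ hne
    apply hne'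
    have h1 := key k (e ≫ a) ((e ≫ a) ≫ p) rfl
    have h2 := key k (e ≫ b) ((e ≫ b) ≫ p) rfl
    have hpp : (e ≫ a) ≫ p = (e ≫ b) ≫ p := by
      simp only [Category.assoc, w]
    rw [hpp] at h1
    simp only [Category.assoc] at h1 h2 ⊢
    rw [h1, h2]
  let m : E₀ ⟶ s.pt := Cofork.IsColimit.desc hc desc' hab
  have hm : p ≫ m = desc' := Cofork.IsColimit.π_desc' hc desc' hab
  refine ⟨m, fun f0 => ?_, ?_⟩
  · have h1 : Sigma.ι f ⟨f0.left, f0.hom⟩ ≫ p ≫ m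
        = Sigma.ι f ⟨f0.left, f0.hom⟩ ≫ desc' := by rw [hm]
    rw [← Category.assoc, hι ⟨f0.left, f0.hom⟩, hdesc'] at h1
    rw [CostructuredArrow.eq_mk f0]
    exact h1
  · intro m' hm'
    by_contra hne
    obtain ⟨i, e, hne'⟩ := hG _ _ hne
    apply hne'
    have h1 := hm' (CostructuredArrow.mk e)
    have h2 : Sigma.ι f ⟨i, e⟩ ≫ p ≫ m = Sigma.ι f ⟨i, e⟩ ≫ desc' := by rw [hm]
    rw [← Category.assoc, hι ⟨i, e⟩, hdesc'] at h2
    simp only [canonicalCocone_ι_app, CostructuredArrow.mk_hom_eq_self] at h1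
    exact h1.trans h2.symm

end Giraud
end

section
/- Let (C,J) be a small site and R a commutative ring. In the category Sh(C,J; ModuleCat R) of sheaves of R-modules: (a) every epimorphism is a coequalizer of its kernel pair; (b) every equivalence relation is effective (it is the kernel pair of its coequalizer, which exists); (c) exact forks are stable under pullback; and (d) the category has a small set of generators. -/
/-!
STATEMENT 16: in the category `Sh(C,J; ModuleCat R)` of sheaves of `R`-modules
on a small site: (a) every epimorphism is the coequalizer of its kernel pair;
(b) every equivalence relation is effective (it admits a coequalizer and is its
kernel pair); (c) exact forks are stable under pullback; (d) there is a small
set of generators.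
-/

open CategoryTheory CategoryTheory.Limits Opposite

universe v

namespace SheafModGiraud

section AbelianAux

universe w u
variable {A : Type u} [Category.{w} A] [Abelian A]

/-- In an abelian category, an epi is the coequalizer of any kernel pair of it. -/
noncomputable def coeqOfKernelPairEpi {P M Q : A} {a b : P ⟶ M} {q : M ⟶ Q} [Epi q]
    (hkp : IsKernelPair q a b) (w : a ≫ q = b ≫ q) :
    IsColimit (Cofork.ofπ q w) := by
  have hker : ∀ {T : A} (t : M ⟶ T), a ≫ t = b ≫ t → kernel.ι q ≫ t = 0 := by
    intro T t ht
    have hl : hkp.lift (kernel.ι q) 0 (by simp) ≫ a = kernel.ι q := hkp.lift_fst _ _ _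
    have hl' : hkp.lift (kernel.ι q) 0 (by simp) ≫ b = 0 := hkp.lift_snd _ _ _
    calc kernel.ι q ≫ t = hkp.lift (kernel.ι q) 0 (by simp) ≫ a ≫ t := by
          rw [← Category.assoc, hl]
      _ = hkp.lift (kernel.ι q) 0 (by simp) ≫ b ≫ t := by rw [ht]
      _ = 0 := by rw [← Category.assoc, hl', zero_comp]
  refine Cofork.IsColimit.mk _
    (fun s => Abelian.epiDesc q s.π (hker s.π s.condition)) (fun s => ?_) (fun s m hm => ?_)
  · exact Abelian.comp_epiDesc q s.π (hker s.π s.condition)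
  · rw [← cancel_epi q]
    simpa [Abelian.comp_epiDesc] using hm

/-- A reflexive mono pair in an abelian category is the kernel pair of the cokernel
of the difference. -/
theorem isKernelPair_cokernelπ_of_reflexive {P M : A} (a b : P ⟶ M)
    (hmono : Mono (prod.lift a b)) (r : M ⟶ P) (hra : r ≫ a = 𝟙 M) (hrb : r ≫ b = 𝟙 M) :
    IsKernelPair (cokernel.π (a - b)) a b := by
  have w : a ≫ cokernel.π (a - b) = b ≫ cokernel.π (a - b) := by
    rw [← sub_eq_zero, ← Preadditive.sub_comp]
    exact cokernel.condition _
  set q : M ⟶ cokernel (a - b) := cokernel.π (a - b) with hq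
  -- the comparison map to the kernel pair object
  set u : P ⟶ pullback q q := pullback.lift a b w with hu
  have hufst : u ≫ pullback.fst q q = a := pullback.lift_fst _ _ _
  have husnd : u ≫ pullback.snd q q = b := pullback.lift_snd _ _ _
  -- `u` is a monomorphism
  have humono : Mono u := by
    have heq : prod.lift a b = u ≫ prod.lift (pullback.fst q q) (pullback.snd q q) := by
      apply Limits.prod.hom_ext <;> simp [hufst, husnd]
    rw [heq] at hmono
    exact mono_of_mono u (prod.lift (pullback.fst q q) (pullback.snd q q))
  -- the diagonal, which factors through `u` by reflexivity
  set j : M ⟶ pullback q q := pullback.lift (𝟙 M) (𝟙 M) rfl with hjdef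
  have hjfst : j ≫ pullback.fst q q = 𝟙 M := pullback.lift_fst _ _ _
  have hjsnd : j ≫ pullback.snd q q = 𝟙 M := pullback.lift_snd _ _ _
  have hj : r ≫ u = j := by
    apply pullback.hom_ext <;>
      simp [hjfst, hjsnd, Category.assoc, hufst, husnd, hra, hrb]
  set ν : P ⊞ M ⟶ pullback q q := biprod.desc u j with hν
  -- the difference map, factored through the kernel of `q`
  have hd : (pullback.fst q q - pullback.snd q q) ≫ q = 0 := by
    rw [Preadditive.sub_comp, pullback.condition, sub_self]
  set d' : pullback q q ⟶ Abelian.image (a - b) :=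
    kernel.lift q (pullback.fst q q - pullback.snd q q) hd with hd'def
  have hd'ι : d' ≫ kernel.ι q = pullback.fst q q - pullback.snd q q := kernel.lift_ι _ _ _
  set c : P ⟶ Abelian.image (a - b) := Abelian.factorThruImage (a - b) with hcdef
  have hcι : c ≫ kernel.ι q = a - b := Abelian.image.fac (a - b)
  -- `ν` is an epimorphism: every generalized element of `pullback q q` lifts after an epi
  have hepi : Epi ν := by
    set p : pullback c d' ⟶ P := pullback.fst c d' with hp
    set e' : pullback c d' ⟶ pullback q q := pullback.snd c d' with he'
    have hpc : p ≫ c = e' ≫ d' := pullback.condition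
    have hEpi : Epi e' := by infer_instance
    set h : pullback c d' ⟶ P ⊞ M :=
      biprod.lift p (e' ≫ pullback.snd q q - p ≫ b) with hh
    have hfac : h ≫ ν = e' := by
      have k1 : p ≫ (c ≫ kernel.ι q) = e' ≫ (d' ≫ kernel.ι q) := by
        rw [← Category.assoc, hpc, Category.assoc]
      rw [hcι, hd'ι] at k1
      have key : p ≫ a - p ≫ b = e' ≫ pullback.fst q q - e' ≫ pullback.snd q q := by
        simpa [Preadditive.comp_sub] using k1
      apply pullback.hom_ext
      · have h1 : h ≫ ν ≫ pullback.fst q q = p ≫ a + (e' ≫ pullback.snd q q - p ≫ b) := by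
          simp [hh, hν, hufst, hjfst, Preadditive.add_comp, Preadditive.sub_comp]
        rw [Category.assoc, h1]
        calc p ≫ a + (e' ≫ pullback.snd q q - p ≫ b)
            = (p ≫ a - p ≫ b) + e' ≫ pullback.snd q q := by abel
          _ = (e' ≫ pullback.fst q q - e' ≫ pullback.snd q q) + e' ≫ pullback.snd q q := by
              rw [key]
          _ = e' ≫ pullback.fst q q := by abel
      · have h2 : h ≫ ν ≫ pullback.snd q q = p ≫ b + (e' ≫ pullback.snd q q - p ≫ b) := by
          simp [hh, hν, husnd, hjsnd, Preadditive.add_comp, Preadditive.sub_comp]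
        rw [Category.assoc, h2]
        abel
    have : Epi (h ≫ ν) := by rw [hfac]; infer_instance
    exact epi_of_epi h ν
  -- hence `u` is an epimorphism
  have huepi : Epi u := by
    have hfac : biprod.desc (𝟙 P) r ≫ u = ν := by
      apply biprod.hom_ext' <;> simp [hν, hj]
    have : Epi (biprod.desc (𝟙 P) r ≫ u) := by rw [hfac]; exact hepi
    exact epi_of_epi (biprod.desc (𝟙 P) r) u
  have : IsIso u := isIso_of_mono_of_epi u
  exact IsPullback.of_iso_pullback ⟨w⟩ (asIso u) hufst husnd

set_option maxHeartbeats 1000000 in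
/-- Kernel pairs (with their coequalizers) are stable under pullback. -/
theorem isKernelPair_pullback_map {P M Q Q' : A} (a b : P ⟶ M) (q : M ⟶ Q)
    (w : a ≫ q = b ≫ q) (hkp : IsKernelPair q a b) (g : Q' ⟶ Q) :
    IsKernelPair (pullback.snd q g)
      (pullback.map (a ≫ q) g q g a (𝟙 Q') (𝟙 Q) (by simp) (by simp))
      (pullback.map (a ≫ q) g q g b (𝟙 Q') (𝟙 Q) (by simp [w]) (by simp)) := by
  set a' : pullback (a ≫ q) g ⟶ pullback q g :=
    pullback.map (a ≫ q) g q g a (𝟙 Q') (𝟙 Q) (by simp) (by simp) with ha'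
  set b' : pullback (a ≫ q) g ⟶ pullback q g :=
    pullback.map (a ≫ q) g q g b (𝟙 Q') (𝟙 Q) (by simp [w]) (by simp) with hb'
  have ha'fst : a' ≫ pullback.fst q g = pullback.fst (a ≫ q) g ≫ a := pullback.lift_fst _ _ _
  have ha'snd : a' ≫ pullback.snd q g = pullback.snd (a ≫ q) g :=
    (pullback.lift_snd _ _ _).trans (Category.comp_id _)
  have hb'fst : b' ≫ pullback.fst q g = pullback.fst (a ≫ q) g ≫ b := pullback.lift_fst _ _ _
  have hb'snd : b' ≫ pullback.snd q g = pullback.snd (a ≫ q) g :=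
    (pullback.lift_snd _ _ _).trans (Category.comp_id _)
  have comm : a' ≫ pullback.snd q g = b' ≫ pullback.snd q g := by rw [ha'snd, hb'snd]
  have hlim : IsLimit (PullbackCone.mk a' b' comm) := by
    refine PullbackCone.IsLimit.mk comm
      (fun s => pullback.lift
        (hkp.lift (s.fst ≫ pullback.fst q g) (s.snd ≫ pullback.fst q g) ?_)
        (s.fst ≫ pullback.snd q g) ?_) (fun s => ?_) (fun s => ?_) (fun s m h₁ h₂ => ?_)
    · -- (s.fst ≫ fst) ≫ q = (s.snd ≫ fst) ≫ q
      have hs : s.fst ≫ pullback.snd q g = s.snd ≫ pullback.snd q g := s.condition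
      simp only [Category.assoc, pullback.condition]
      simp only [← Category.assoc, hs]
    · slice_lhs 1 2 => rw [hkp.lift_fst]
      simp only [Category.assoc, pullback.condition]
    · apply pullback.hom_ext
      · slice_lhs 2 3 => rw [ha'fst]
        slice_lhs 1 2 => rw [pullback.lift_fst]
        slice_lhs 1 2 => rw [hkp.lift_fst]
      · slice_lhs 2 3 => rw [ha'snd]
        rw [pullback.lift_snd]
    · apply pullback.hom_ext
      · slice_lhs 2 3 => rw [hb'fst]
        slice_lhs 1 2 => rw [pullback.lift_fst]
        slice_lhs 1 2 => rw [hkp.lift_snd]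
      · slice_lhs 2 3 => rw [hb'snd]
        rw [pullback.lift_snd, s.condition]
    · have e1 : (m ≫ pullback.fst (a ≫ q) g) ≫ a = s.fst ≫ pullback.fst q g := by
        rw [Category.assoc, ← ha'fst, ← Category.assoc, h₁]
      have e2 : (m ≫ pullback.fst (a ≫ q) g) ≫ b = s.snd ≫ pullback.fst q g := by
        rw [Category.assoc, ← hb'fst, ← Category.assoc, h₂]
      have e3 : m ≫ pullback.snd (a ≫ q) g = s.fst ≫ pullback.snd q g := by
        rw [← ha'snd, ← Category.assoc, h₁]
      apply pullback.hom_ext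
      · rw [pullback.lift_fst]
        refine PullbackCone.IsLimit.hom_ext hkp.isLimit ?_ ?_
        · exact e1.trans (hkp.lift_fst _ _ _).symm
        · exact e2.trans (hkp.lift_snd _ _ _).symm
      · rw [pullback.lift_snd]; exact e3
  exact IsPullback.of_isLimit hlim

end AbelianAux

variable {C : Type v} [SmallCategory C] (J : GrothendieckTopology C)
variable (R : Type v) [CommRing R]

/-- An exact fork in the category of sheaves of `R`-modules. -/
def IsExactFork {P M Q : Sheaf J (ModuleCat.{v} R)} (a b : P ⟶ M) (q : M ⟶ Q) :
    Prop :=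
  IsKernelPair q a b ∧ ∃ w : a ≫ q = b ≫ q, Nonempty (IsColimit (Cofork.ofπ q w))

/-- An internal equivalence relation in the category of sheaves of `R`-modules. -/
def IsEquivRelPair {P M : Sheaf J (ModuleCat.{v} R)} (a b : P ⟶ M) : Prop :=
  Mono (prod.lift a b) ∧
  (∃ r : M ⟶ P, r ≫ a = 𝟙 M ∧ r ≫ b = 𝟙 M) ∧
  (∃ s : P ⟶ P, s ≫ a = b ∧ s ≫ b = a) ∧
  (∃ t : pullback b a ⟶ P,
      t ≫ a = pullback.fst b a ≫ a ∧ t ≫ b = pullback.snd b a ≫ b)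

theorem sheaves_of_modules_giraud_conditions :
    -- (a) every epimorphism is the coequalizer of its kernel pair
    (∀ {M N : Sheaf J (ModuleCat.{v} R)} (q : M ⟶ N), Epi q →
      Nonempty (IsColimit (Cofork.ofπ q (pullback.condition (f := q) (g := q))))) ∧
    -- (b) every equivalence relation is effective
    (∀ {P M : Sheaf J (ModuleCat.{v} R)} (a b : P ⟶ M), IsEquivRelPair J R a b →
      ∃ (Q : Sheaf J (ModuleCat.{v} R)) (q : M ⟶ Q) (w : a ≫ q = b ≫ q),
        Nonempty (IsColimit (Cofork.ofπ q w)) ∧ IsKernelPair q a b) ∧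
    -- (c) exact forks are stable under pullback
    (∀ {P M Q Q' : Sheaf J (ModuleCat.{v} R)} (a b : P ⟶ M) (q : M ⟶ Q)
      (w : a ≫ q = b ≫ q), IsKernelPair q a b →
      Nonempty (IsColimit (Cofork.ofπ q w)) → ∀ (g : Q' ⟶ Q),
      IsExactFork J R
        (pullback.map (a ≫ q) g q g a (𝟙 Q') (𝟙 Q) (by simp) (by simp))
        (pullback.map (a ≫ q) g q g b (𝟙 Q') (𝟙 Q) (by simp [w]) (by simp))
        (pullback.snd q g)) ∧
    -- (d) there is a small set of generators
    (∃ (ι : Type v) (G : ι → Sheaf J (ModuleCat.{v} R)),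
      ∀ {F F' : Sheaf J (ModuleCat.{v} R)} (u v : F ⟶ F'), u ≠ v →
        ∃ (i : ι) (f : G i ⟶ F), f ≫ u ≠ f ≫ v) := by
  refine ⟨?_, ?_, ?_, ?_⟩
  · -- (a)
    intro M N q hq
    have hkp : IsKernelPair q (pullback.fst q q) (pullback.snd q q) :=
      IsPullback.of_hasPullback q q
    exact ⟨coeqOfKernelPairEpi hkp _⟩
  · -- (b)
    intro P M a b h
    obtain ⟨hmono, ⟨r, hra, hrb⟩, -, -⟩ := h
    have hkp := isKernelPair_cokernelπ_of_reflexive a b hmono r hra hrb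
    have w : a ≫ cokernel.π (a - b) = b ≫ cokernel.π (a - b) := hkp.w
    have hepi : Epi (cokernel.π (a - b)) := by infer_instance
    exact ⟨cokernel (a - b), cokernel.π (a - b), w, ⟨coeqOfKernelPairEpi hkp w⟩, hkp⟩
  · -- (c)
    intro P M Q Q' a b q w hkp hcoeq g
    obtain ⟨hc⟩ := hcoeq
    have hqepi : Epi q := by
      have : Epi (Cofork.ofπ q w).π := epi_of_isColimit_cofork hc
      simpa using this
    have hkp' := isKernelPair_pullback_map a b q w hkp g
    have hepi' : Epi (pullback.snd q g) := by infer_instance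
    exact ⟨hkp', hkp'.w, ⟨coeqOfKernelPairEpi hkp' hkp'.w⟩⟩
  · -- (d)
    refine ⟨C, fun c => (presheafToSheaf J (ModuleCat.{v} R)).obj
      (yoneda.obj c ⋙ ModuleCat.free R), ?_⟩
    intro F F' u v huv
    have hval : u.hom ≠ v.hom := fun h => huv (Sheaf.hom_ext h)
    have hex : ∃ c : Cᵒᵖ, u.hom.app c ≠ v.hom.app c := by
      by_contra h
      push_neg at h
      exact hval (NatTrans.ext (funext h))
    obtain ⟨c, hc⟩ := hex
    obtain ⟨c0⟩ := c
    have hex2 : ∃ m : F.val.obj (op c0), u.hom.app (op c0) m ≠ v.hom.app (op c0) m := by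
      by_contra h
      push_neg at h
      exact hc (ModuleCat.hom_ext (LinearMap.ext h))
    obtain ⟨m, hm⟩ := hex2
    -- build the testing morphism
    let adj2 := (ModuleCat.adj R).whiskerRight Cᵒᵖ
    let g0 : yoneda.obj c0 ⟶ F.val ⋙ forget (ModuleCat.{v} R) :=
      yonedaEquiv.symm m
    let f0 : yoneda.obj c0 ⋙ ModuleCat.free R ⟶ F.val :=
      (adj2.homEquiv _ _).symm g0
    let f : (presheafToSheaf J (ModuleCat.{v} R)).obj (yoneda.obj c0 ⋙ ModuleCat.free R) ⟶ F :=
      ((sheafificationAdjunction J (ModuleCat.{v} R)).homEquiv _ _).symm f0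
    refine ⟨c0, f, fun hconts => ?_⟩
    -- transpose the equality back down
    have h1 : f0 ≫ u.hom = f0 ≫ v.hom := by
      have e1 := congrArg ((sheafificationAdjunction J (ModuleCat.{v} R)).homEquiv _ _) hconts
      rwa [Adjunction.homEquiv_naturality_right, Adjunction.homEquiv_naturality_right,
        Equiv.apply_symm_apply] at e1
    have h2 : g0 ≫ Functor.whiskerRight u.hom (forget _) = g0 ≫ Functor.whiskerRight v.hom (forget _) := by
      have e2 := congrArg (adj2.homEquiv _ _) h1
      rwa [Adjunction.homEquiv_naturality_right, Adjunction.homEquiv_naturality_right,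
        Equiv.apply_symm_apply] at e2
    have h3 := congrArg yonedaEquiv h2
    rw [yonedaEquiv_comp, yonedaEquiv_comp, Equiv.apply_symm_apply] at h3
    exact hm (by simpa using h3)

end SheafModGiraud
end

section
/- Let (C,J) be a small site and R a commutative ring, and let a denote the sheafification functor from presheaves of R-modules to Sh(C,J; ModuleCat R). Then the family {a(R⋅Hom(−,C₀)) : C₀ an object of C} of sheafified free representable presheaves is a small set of generators of Sh(C,J; ModuleCat R): for any distinct parallel morphisms u, v : F → F' of sheaves of R-modules there exist an object C₀ of C and a morphism f : a(R⋅Hom(−,C₀)) → F with u∘f ≠ v∘f. -/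
/-!
STATEMENT 17: the sheafified free representable presheaves
`a(R⋅Hom(−,C₀))`, for `C₀` an object of `C`, form a small set of generators of
the category `Sh(C,J; ModuleCat R)` of sheaves of `R`-modules.
-/

open CategoryTheory CategoryTheory.Limits Opposite

universe v

namespace SheafModGiraud

variable {C : Type v} [SmallCategory C] (J : GrothendieckTopology C)
variable (R : Type v) [CommRing R]

/-- The free representable presheaf of `R`-modules `R⋅Hom(−,C₀)`. -/
noncomputable def freeRep (C₀ : C) : Cᵒᵖ ⥤ ModuleCat.{v} R :=
  yoneda.obj C₀ ⋙ ModuleCat.free R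

variable {R}

/-- The natural transformation `freeRep R C₀ ⟶ G` determined by an element of `G.obj (op C₀)`. -/
noncomputable def elemHom {C₀ : C} (G : Cᵒᵖ ⥤ ModuleCat.{v} R) (x : G.obj (op C₀)) :
    freeRep R C₀ ⟶ G where
  app X := ModuleCat.freeDesc (TypeCat.ofHom fun g : X.unop ⟶ C₀ => G.map g.op x)
  naturality X Y f := by
    apply ModuleCat.free_hom_ext
    intro g
    change (ModuleCat.freeDesc (TypeCat.ofHom fun g : Y.unop ⟶ C₀ => (G.map g.op) x))
        ((ModuleCat.free R).map ((yoneda.obj C₀).map f) (ModuleCat.freeMk g)) =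
      G.map f ((ModuleCat.freeDesc (TypeCat.ofHom fun g : X.unop ⟶ C₀ => (G.map g.op) x)) (ModuleCat.freeMk g))
    rw [ModuleCat.free_map_apply, ModuleCat.freeDesc_apply, ModuleCat.freeDesc_apply]
    have : Quiver.Hom.op ((yoneda.obj C₀).map f g) = Quiver.Hom.op g ≫ f := rfl
    show G.map (Quiver.Hom.op ((yoneda.obj C₀).map f g)) x = G.map f (G.map g.op x)
    rw [this, G.map_comp]
    rfl

@[simp]
lemma elemHom_app {C₀ : C} (G : Cᵒᵖ ⥤ ModuleCat.{v} R) (x : G.obj (op C₀)) :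
    (elemHom G x).app (op C₀) (ModuleCat.freeMk (𝟙 C₀)) = x := by
  erw [ModuleCat.freeDesc_apply]
  simp

theorem sheafified_freeRep_generate
    {F F' : Sheaf J (ModuleCat.{v} R)} (u v : F ⟶ F') (h : u ≠ v) :
    ∃ (C₀ : C)
      (f : (presheafToSheaf J (ModuleCat.{v} R)).obj (freeRep R C₀) ⟶ F),
      f ≫ u ≠ f ≫ v := by
  have hval : u.hom ≠ v.hom := fun e => h (Sheaf.hom_ext e)
  have : ∃ (X : Cᵒᵖ) (x : F.val.obj X), u.hom.app X x ≠ v.hom.app X x := by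
    by_contra hc
    push_neg at hc
    exact hval (NatTrans.ext (funext fun X => ModuleCat.hom_ext (LinearMap.ext fun x => hc X x)))
  obtain ⟨X, x, hx⟩ := this
  let A := sheafificationAdjunction J (ModuleCat.{v} R)
  let φ : freeRep R X.unop ⟶ F.val := elemHom F.val (x : F.val.obj (op X.unop))
  refine ⟨X.unop, (A.homEquiv _ F).symm φ, fun e => hx ?_⟩
  rw [← Adjunction.homEquiv_naturality_right_symm A φ u,
    ← Adjunction.homEquiv_naturality_right_symm A φ v] at e
  have e2 : φ ≫ u.hom = φ ≫ v.hom := (A.homEquiv _ F').symm.injective e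
  have e3 := congrArg (fun (ψ : freeRep R X.unop ⟶ F'.val) =>
    ψ.app (op X.unop) (ModuleCat.freeMk (𝟙 X.unop))) e2
  have e4 : (elemHom F.val x).app (op X.unop) (ModuleCat.freeMk (𝟙 X.unop)) = x :=
    elemHom_app F.val x
  have e5 : u.hom.app (op X.unop) ((elemHom F.val x).app (op X.unop) (ModuleCat.freeMk (𝟙 X.unop))) =
      v.hom.app (op X.unop) ((elemHom F.val x).app (op X.unop) (ModuleCat.freeMk (𝟙 X.unop))) := e3
  rw [e4] at e5
  exact e5

end SheafModGiraud
end
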